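/- Let F : ℝ^d → ℝ have L-Lipschitz gradient and satisfy the coercivity bound ‖∇F(x)‖² ≥ λ_c F(x) - M_c. Suppose Lh ≤ 1/2 and 0 < η ≤ 1/(8γ). Let V(x) = exp(η F(x)) and let Y' = Y - h∇F(Y) + √(2γh)Z with Z ∼ N(0, I_d). Then E[V(Y')] ≤ exp(-(η h λ_c / 4) F(Y) + η h C_V) · V(Y), where C_V = M_c/4 + 4γLd. -/

import Mathlib

open Real MeasureTheory Complex
open scoped RealInnerProductSpace

section helpers

-- descent lemma
lemma my_descent {d : ℕ} {F : EuclideanSpace ℝ (Fin d) → ℝ} {L : ℝ}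
    (hdiff : ContDiff ℝ 1 F)
    (hLip : ∀ x y, ‖gradient F x - gradient F y‖ ≤ L * ‖x - y‖)
    (x v : EuclideanSpace ℝ (Fin d)) :
    F (x + v) ≤ F x + ⟪gradient F x, v⟫ + L / 2 * ‖v‖ ^ 2 := by
  have hFd : Differentiable ℝ F := hdiff.differentiable one_ne_zero
  have key : ∀ t : ℝ, HasDerivAt (fun t : ℝ ↦ F (x + t • v))
      ⟪gradient F (x + t • v), v⟫ t := by
    intro t
    have hc : HasDerivAt (fun t : ℝ ↦ x + t • v) v t := by
      simpa using ((hasDerivAt_id t).smul_const v).const_add x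
    have hg := ((hFd (x + t • v)).hasGradientAt).hasFDerivAt
    have := hg.comp_hasDerivAt t hc
    simpa [Function.comp_def] using this
  set φ : ℝ → ℝ := fun t ↦ F (x + t • v) - t * ⟪gradient F x, v⟫ - L * ‖v‖ ^ 2 * t ^ 2 / 2
    with hφdef
  have hφ : ∀ t : ℝ, HasDerivAt φ
      (⟪gradient F (x + t • v), v⟫ - ⟪gradient F x, v⟫ - L * ‖v‖ ^ 2 * t) t := by
    intro t
    have h1 : HasDerivAt (fun t : ℝ ↦ t * ⟪gradient F x, v⟫) ⟪gradient F x, v⟫ t := by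
      simpa using (hasDerivAt_id t).mul_const ⟪gradient F x, v⟫
    have h2 : HasDerivAt (fun t : ℝ ↦ L * ‖v‖ ^ 2 * t ^ 2 / 2) (L * ‖v‖ ^ 2 * t) t := by
      have := ((hasDerivAt_pow 2 t).const_mul (L * ‖v‖ ^ 2)).div_const 2
      exact this.congr_deriv (by ring)
    exact ((key t).sub h1).sub h2
  have hanti : AntitoneOn φ (Set.Ici (0 : ℝ)) := by
    apply antitoneOn_of_deriv_nonpos (convex_Ici 0)
    · exact (fun t _ => ((hφ t).differentiableAt).continuousAt.continuousWithinAt)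
    · exact fun t _ => ((hφ t).differentiableAt).differentiableWithinAt
    · intro t ht
      rw [interior_Ici] at ht
      rw [(hφ t).deriv]
      have h3 : ⟪gradient F (x + t • v), v⟫ - ⟪gradient F x, v⟫
          ≤ L * ‖v‖ ^ 2 * t := by
        have h4 : ⟪gradient F (x + t • v) - gradient F x, v⟫
            ≤ ‖gradient F (x + t • v) - gradient F x‖ * ‖v‖ :=
          real_inner_le_norm _ _
        have h5 : ‖gradient F (x + t • v) - gradient F x‖ ≤ L * (t * ‖v‖) := by
          have := hLip (x + t • v) x
          simpa [norm_smul, _root_.abs_of_nonneg (le_of_lt (Set.mem_Ioi.mp ht))] using this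
        have h6 : (0:ℝ) ≤ ‖v‖ := norm_nonneg v
        rw [inner_sub_left] at h4
        nlinarith [norm_nonneg (gradient F (x + t • v) - gradient F x)]
      linarith
  have := hanti (Set.self_mem_Ici) (by norm_num : (1:ℝ) ∈ Set.Ici (0:ℝ)) zero_le_one
  simp only [hφdef, one_smul, zero_smul, add_zero, one_pow, mul_one, one_mul, zero_mul,
    mul_zero, zero_pow, sub_zero, zero_div, ne_eq, OfNat.ofNat_ne_zero,
    not_false_eq_true] at this
  linarith


lemma my_cast {d : ℕ} (b c : ℝ) (w v : EuclideanSpace ℝ (Fin d)) :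
    ((-b * ‖v‖ ^ 2 + c * ⟪w, v⟫ : ℝ) : ℂ) = -(b:ℂ) * ‖v‖ ^ 2 + (c:ℂ) * ⟪w, v⟫ := by
  push_cast; ring

lemma my_integrable {d : ℕ} {b : ℝ} (hb : 0 < b) (c : ℝ) (w : EuclideanSpace ℝ (Fin d)) :
    Integrable (fun v : EuclideanSpace ℝ (Fin d) ↦ rexp (-b * ‖v‖ ^ 2 + c * ⟪w, v⟫)) := by
  have h := (GaussianFourier.integrable_cexp_neg_mul_sq_norm_add
    (V := EuclideanSpace ℝ (Fin d)) (b := (b:ℂ)) (by simpa using hb) (c:ℂ) w).re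
  refine h.congr (Filter.Eventually.of_forall fun v => ?_)
  dsimp only
  rw [RCLike.re_to_complex, ← my_cast, Complex.exp_ofReal_re]

lemma my_integral {d : ℕ} {b : ℝ} (hb : 0 < b) (c : ℝ) (w : EuclideanSpace ℝ (Fin d)) :
    ∫ v : EuclideanSpace ℝ (Fin d), rexp (-b * ‖v‖ ^ 2 + c * ⟪w, v⟫)
      = (π / b) ^ ((d : ℝ) / 2) * rexp (c ^ 2 * ‖w‖ ^ 2 / (4 * b)) := by
  rw [← Complex.ofReal_inj]
  have h := GaussianFourier.integral_cexp_neg_mul_sq_norm_add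
    (V := EuclideanSpace ℝ (Fin d)) (b := (b:ℂ)) (by simpa using hb) (c:ℂ) w
  have hL : ((∫ v : EuclideanSpace ℝ (Fin d), rexp (-b * ‖v‖ ^ 2 + c * ⟪w, v⟫) : ℝ) : ℂ)
      = ∫ v : EuclideanSpace ℝ (Fin d), cexp (-(b:ℂ) * ‖v‖ ^ 2 + (c:ℂ) * ⟪w, v⟫) := by
    change Complex.ofRealLI _ = _
    rw [← Complex.ofRealLI.integral_comp_comm]
    congr 1; ext v
    simp only [Complex.ofRealLI, LinearIsometry.coe_mk, LinearMap.coe_mk, AddHom.coe_mk]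
    show ((rexp (-b * ‖v‖ ^ 2 + c * ⟪w, v⟫) : ℝ) : ℂ) = _
    rw [Complex.ofReal_exp, my_cast]
  rw [hL, h, finrank_euclideanSpace_fin]
  rw [show ((d:ℕ):ℂ)/2 = (((d:ℝ)/2 : ℝ):ℂ) by push_cast; ring]
  rw [show ((c:ℂ)) ^ 2 * (‖w‖:ℂ) ^ 2 / (4 * (b:ℂ)) = ((c ^ 2 * ‖w‖ ^ 2 / (4 * b) : ℝ) : ℂ) by
    push_cast; ring]
  rw [← Complex.ofReal_exp, show ((π:ℂ)/(b:ℂ)) = ((π/b : ℝ):ℂ) by push_cast; ring,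
    ← Complex.ofReal_cpow (by positivity), ← Complex.ofReal_mul]

end helpers

set_option maxHeartbeats 1000000 in
theorem stmt4 (d : ℕ) (F : EuclideanSpace ℝ (Fin d) → ℝ) (L γ h η lamc Mc : ℝ)
    (hL : 0 < L) (hγ : 0 < γ) (hh : 0 < h) (hLh : L * h ≤ 1 / 2)
    (hη0 : 0 < η) (hη : η ≤ 1 / (8 * γ))
    (hlamc : 0 < lamc) (hMc : 0 < Mc)
    (hdiff : ContDiff ℝ 1 F)
    (hLip : ∀ x y, ‖gradient F x - gradient F y‖ ≤ L * ‖x - y‖)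
    (hcoercive : ∀ x, ‖gradient F x‖ ^ 2 ≥ lamc * F x - Mc)
    (Y : EuclideanSpace ℝ (Fin d)) :
    (∫ z : EuclideanSpace ℝ (Fin d),
        ((2 * π) ^ (-(d : ℝ) / 2) * Real.exp (-‖z‖ ^ 2 / 2)) *
          Real.exp (η * F (Y - h • gradient F Y + Real.sqrt (2 * γ * h) • z)))
      ≤ Real.exp (-(η * h * lamc / 4) * F Y + η * h * (Mc / 4 + 4 * γ * L * d)) *
          Real.exp (η * F Y) := by
  have hπ : (0:ℝ) < π := Real.pi_pos
  set g := gradient F Y with hg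
  set s := Real.sqrt (2 * γ * h) with hs
  have hs2 : s ^ 2 = 2 * γ * h := Real.sq_sqrt (by positivity)
  have hs0 : 0 ≤ s := Real.sqrt_nonneg _
  set α := 2 * η * γ * L * h with hα
  have hηγ : η * γ ≤ 1 / 8 := by
    rw [le_div_iff₀ (by positivity)] at hη
    nlinarith
  have hα18 : α ≤ 1 / 8 := by nlinarith [mul_pos hη0 hγ, mul_pos hL hh]
  have hα0 : 0 ≤ α := by positivity
  set b := 1/2 - α with hb
  have hb38 : 3/8 ≤ b := by rw [hb]; linarith
  have hb0 : 0 < b := lt_of_lt_of_le (by norm_num) hb38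
  set c := η * s with hc
  set K := (2*π) ^ (-(d:ℝ)/2) * rexp (η * F Y - η*h*(1-L*h)*‖g‖^2) with hK
  have hG : (0:ℝ) ≤ ‖g‖^2 := sq_nonneg _
  -- pointwise bound
  have hpt : ∀ z : EuclideanSpace ℝ (Fin d),
      ((2*π) ^ (-(d:ℝ)/2) * rexp (-‖z‖^2/2)) * rexp (η * F (Y - h • g + s • z))
        ≤ K * rexp (-b*‖z‖^2 + c*⟪g,z⟫) := by
    intro z
    have hvdef : Y - h • g + s • z = Y + (s • z - h • g) := by abel
    have hdesc := my_descent hdiff hLip Y (s • z - h • g)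
    rw [← hg] at hdesc
    have hinner : ⟪g, s • z - h • g⟫ = s * ⟪g, z⟫ - h * ‖g‖^2 := by
      rw [inner_sub_right, real_inner_smul_right, real_inner_smul_right,
        real_inner_self_eq_norm_sq]
    have hnv : ‖s • z - h • g‖^2 ≤ 2*(s^2*‖z‖^2) + 2*(h^2*‖g‖^2) := by
      have h1 : ‖s • z - h • g‖ ≤ s*‖z‖ + h*‖g‖ := by
        calc ‖s • z - h • g‖ ≤ ‖s • z‖ + ‖h • g‖ := norm_sub_le _ _
        _ = s*‖z‖ + h*‖g‖ := by
            rw [norm_smul, norm_smul, Real.norm_eq_abs, Real.norm_eq_abs,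
              _root_.abs_of_nonneg hs0, _root_.abs_of_nonneg hh.le]
      have h1' := mul_self_le_mul_self (norm_nonneg (s • z - h • g)) h1
      nlinarith [h1', sq_nonneg (s*‖z‖ - h*‖g‖), mul_nonneg hs0 (norm_nonneg z),
        mul_nonneg hh.le (norm_nonneg g)]
    have hF' : F (Y - h • g + s • z)
        ≤ F Y - h*(1-L*h)*‖g‖^2 + s*⟪g,z⟫ + 2*γ*L*h*‖z‖^2 := by
      rw [hvdef]
      have h7 : L/2*‖s • z - h • g‖^2 ≤ L/2*(2*(s^2*‖z‖^2) + 2*(h^2*‖g‖^2)) :=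
        mul_le_mul_of_nonneg_left hnv (by positivity)
      have e3 : L/2*(2*(s^2*‖z‖^2) + 2*(h^2*‖g‖^2))
          = 2*γ*L*h*‖z‖^2 + L*h^2*‖g‖^2 := by rw [hs2]; ring
      linarith [hdesc, hinner, h7, e3]
    have hexp : -‖z‖^2/2 + η * F (Y - h • g + s • z)
        ≤ (η * F Y - η*h*(1-L*h)*‖g‖^2) + (-b*‖z‖^2 + c*⟪g,z⟫) := by
      have h2 := mul_le_mul_of_nonneg_left hF' hη0.le
      have h2' : η * F (Y - h • g + s • z) ≤ η * F Y - η*h*(1-L*h)*‖g‖^2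
          + η*(s*⟪g,z⟫) + η*(2*γ*L*h)*‖z‖^2 := by linear_combination h2
      have e1 : c*⟪g,z⟫ = η*(s*⟪g,z⟫) := by rw [hc]; ring
      have e2 : -b*‖z‖^2 = -‖z‖^2/2 + η*(2*γ*L*h)*‖z‖^2 := by rw [hb, hα]; ring
      linarith [h2', e1, e2]
    calc ((2*π) ^ (-(d:ℝ)/2) * rexp (-‖z‖^2/2)) * rexp (η * F (Y - h • g + s • z))
        = (2*π) ^ (-(d:ℝ)/2) * rexp (-‖z‖^2/2 + η * F (Y - h • g + s • z)) := by
          rw [mul_assoc, ← Real.exp_add]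
      _ ≤ (2*π) ^ (-(d:ℝ)/2)
          * rexp ((η * F Y - η*h*(1-L*h)*‖g‖^2) + (-b*‖z‖^2 + c*⟪g,z⟫)) := by
          exact mul_le_mul_of_nonneg_left (Real.exp_le_exp.2 hexp) (by positivity)
      _ = K * rexp (-b*‖z‖^2 + c*⟪g,z⟫) := by rw [hK, Real.exp_add]; ring
  have hint : Integrable (fun z : EuclideanSpace ℝ (Fin d)
      ↦ K * rexp (-b*‖z‖^2 + c*⟪g,z⟫)) := (my_integrable hb0 c g).const_mul K
  have hmono : (∫ z : EuclideanSpace ℝ (Fin d),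
        ((2 * π) ^ (-(d : ℝ) / 2) * rexp (-‖z‖ ^ 2 / 2)) * rexp (η * F (Y - h • g + s • z)))
      ≤ ∫ z : EuclideanSpace ℝ (Fin d), K * rexp (-b*‖z‖^2 + c*⟪g,z⟫) :=
    integral_mono_of_nonneg (Filter.Eventually.of_forall fun z => by positivity) hint
      (Filter.Eventually.of_forall hpt)
  have hval : (∫ z : EuclideanSpace ℝ (Fin d), K * rexp (-b*‖z‖^2 + c*⟪g,z⟫))
      = K * ((π/b) ^ ((d:ℝ)/2) * rexp (c^2*‖g‖^2/(4*b))) := by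
    rw [MeasureTheory.integral_const_mul, my_integral hb0]
  refine hmono.trans ?_
  rw [hval]
  -- now the numeric bound
  have hA : (2*π) ^ (-(d:ℝ)/2) * (π/b) ^ ((d:ℝ)/2) = (1/(2*b)) ^ ((d:ℝ)/2) := by
    rw [show (-(d:ℝ)/2) = -((d:ℝ)/2) by ring, Real.rpow_neg (by positivity),
      inv_mul_eq_div, div_eq_iff (by positivity),
      ← Real.mul_rpow (by positivity) (by positivity)]
    congr 1
    field_simp
  have h2b : rexp (-(4*α)) ≤ 2*b := by
    have h1 : 1 + 4*α ≤ rexp (4*α) := by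
      have := Real.add_one_le_exp (4*α); linarith
    have h2 : rexp (-(4*α)) = (rexp (4*α))⁻¹ := by
      rw [Real.exp_neg]
    have h3 : (rexp (4*α))⁻¹ ≤ (1 + 4*α)⁻¹ := by
      apply inv_anti₀ (by positivity) h1
    have h4 : (1 + 4*α)⁻¹ ≤ 1 - 2*α := by
      rw [inv_le_iff_one_le_mul₀ (by positivity)]
      nlinarith
    rw [hb]; linarith
  have h1over : 1/(2*b) ≤ rexp (4*α) := by
    rw [div_le_iff₀ (by positivity)]
    have := mul_le_mul_of_nonneg_left h2b (Real.exp_pos (4*α)).le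
    rw [← Real.exp_add] at this
    simpa using this
  have hA2 : (1/(2*b)) ^ ((d:ℝ)/2) ≤ rexp (η*h*(4*γ*L*(d:ℝ))) := by
    calc (1/(2*b)) ^ ((d:ℝ)/2) ≤ (rexp (4*α)) ^ ((d:ℝ)/2) :=
          Real.rpow_le_rpow (by positivity) h1over (by positivity)
      _ = rexp (4*α * ((d:ℝ)/2)) := (Real.exp_mul _ _).symm
      _ = rexp (η*h*(4*γ*L*(d:ℝ))) := by rw [hα]; ring_nf
  have hcoef : c^2/(4*b) ≤ η*h/6 := by
    rw [div_le_iff₀ (by positivity), hc, mul_pow, hs2]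
    nlinarith [hηγ, mul_pos hη0 hh, hb38, mul_nonneg hη0.le hh.le]
  have hB : -(η*h*(1-L*h))*‖g‖^2 + c^2*‖g‖^2/(4*b)
      ≤ -(η * h * lamc / 4) * F Y + η*h*(Mc/4) := by
    have h1' : c^2*‖g‖^2/(4*b) ≤ η*h/6*‖g‖^2 := by
      rw [show c^2*‖g‖^2/(4*b) = c^2/(4*b)*‖g‖^2 by ring]
      exact mul_le_mul_of_nonneg_right hcoef hG
    have h3 : L*h*‖g‖^2 ≤ (1/2)*‖g‖^2 := mul_le_mul_of_nonneg_right hLh hG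
    have h4 : η*h*(L*h*‖g‖^2) ≤ η*h*((1/2)*‖g‖^2) :=
      mul_le_mul_of_nonneg_left h3 (by positivity)
    have h5 : -(η*h/4)*‖g‖^2 ≤ -(η * h * lamc / 4) * F Y + η*h*(Mc/4) := by
      have h6 := mul_le_mul_of_nonneg_left (hcoercive Y) (show (0:ℝ) ≤ η*h/4 by positivity)
      rw [← hg] at h6
      nlinarith
    nlinarith [mul_nonneg (mul_nonneg hη0.le hh.le) hG]
  -- assemble
  calc K * ((π/b) ^ ((d:ℝ)/2) * rexp (c^2*‖g‖^2/(4*b)))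
      = rexp (η * F Y) * ((1/(2*b)) ^ ((d:ℝ)/2)
          * rexp (-(η*h*(1-L*h))*‖g‖^2 + c^2*‖g‖^2/(4*b))) := by
        rw [hK, ← hA, show η * F Y - η*h*(1-L*h)*‖g‖^2
          = η * F Y + (-(η*h*(1-L*h))*‖g‖^2) by ring, Real.exp_add, Real.exp_add]
        ring
    _ ≤ rexp (η * F Y) * (rexp (η*h*(4*γ*L*(d:ℝ)))
          * rexp (-(η * h * lamc / 4) * F Y + η*h*(Mc/4))) := by
        apply mul_le_mul_of_nonneg_left _ (Real.exp_pos _).le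
        exact mul_le_mul hA2 (Real.exp_le_exp.2 hB) (Real.exp_pos _).le (Real.exp_pos _).le
    _ = rexp (-(η * h * lamc / 4) * F Y + η * h * (Mc / 4 + 4 * γ * L * d)) *
          rexp (η * F Y) := by
        rw [← Real.exp_add, ← Real.exp_add, ← Real.exp_add]
        congr 1
        ring
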